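/- Let D = diag(z₁, …, z_S) where z₁, …, z_S are distinct points on the complex unit circle, and let h ∈ ℂ^S with all h_s ≠ 0. Then the matrix R_h = (1/S)∑_{s=1}^S D^s h h^H (D^s)^H ∈ ℂ^{S×S} is Hermitian positive definite (in particular has rank S). -/

import Mathlib

open scoped ComplexOrder
open Matrix

/-- The matrix `R_h = (1/S) ∑_{s=1}^S D^s h hᴴ (D^s)ᴴ`, with
`D = diag(z₁, …, z_S)` for distinct unimodular `z_l` and all gains `h_l ≠ 0`,
is Hermitian positive definite (in particular of rank `S`). Its `(i,j)` entry
is `(1/S) ∑_{s=1}^S (h_i z_i^s) · conj(h_j z_j^s)`. -/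
theorem gram_matrix_posdef (S : ℕ) (z : Fin S → ℂ)
    (hz : Function.Injective z) (hcirc : ∀ l, ‖z l‖ = 1)
    (h : Fin S → ℂ) (hh : ∀ l, h l ≠ 0) :
    (Matrix.of fun i j : Fin S =>
      (1 / (S : ℂ)) * ∑ s ∈ Finset.range S,
        (h i * z i ^ (s + 1)) * (starRingEnd ℂ) (h j * z j ^ (s + 1))).PosDef := by
  rcases Nat.eq_zero_or_pos S with rfl | hS
  · exact ⟨Subsingleton.elim _ _, fun x hx => absurd (Subsingleton.elim x 0) hx⟩
  set A : Matrix (Fin S) (Fin S) ℂ :=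
    Matrix.of fun i s : Fin S => h i * z i ^ ((s : ℕ) + 1) with hA
  have hAfac : A = Matrix.diagonal (fun i => h i * z i) * Matrix.vandermonde z := by
    ext i s
    simp [hA, Matrix.diagonal_mul, Matrix.vandermonde, pow_succ, mul_comm, mul_assoc,
      mul_left_comm]
  have hdet : A.det ≠ 0 := by
    rw [hAfac, Matrix.det_mul, Matrix.det_diagonal]
    refine mul_ne_zero (Finset.prod_ne_zero_iff.mpr fun i _ => mul_ne_zero (hh i) ?_) ?_
    · intro h0
      have := hcirc i
      rw [h0] at this
      simp at this
    · exact Matrix.det_vandermonde_ne_zero_iff.mpr hz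
  have hAH : Function.Injective (Matrix.mulVec Aᴴ) := by
    rw [Matrix.mulVec_injective_iff_isUnit, Matrix.isUnit_iff_isUnit_det,
      Matrix.det_conjTranspose]
    exact (star_ne_zero.mpr hdet).isUnit
  have hM : (Matrix.of fun i j : Fin S =>
      (1 / (S : ℂ)) * ∑ s ∈ Finset.range S,
        (h i * z i ^ (s + 1)) * (starRingEnd ℂ) (h j * z j ^ (s + 1)))
      = (1 / (S : ℂ)) • (A * Aᴴ) := by
    ext i j
    simp only [Matrix.of_apply, Matrix.smul_apply, Matrix.mul_apply,
      Matrix.conjTranspose_apply, smul_eq_mul, hA, ← Fin.sum_univ_eq_sum_range]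
    rfl
  rw [hM]
  have hHerm : ((1 / (S : ℂ)) • (A * Aᴴ)).IsHermitian := by
    unfold Matrix.IsHermitian
    rw [Matrix.conjTranspose_smul, (Matrix.isHermitian_mul_conjTranspose_self A).eq]
    congr 1
    simp
  refine Matrix.PosDef.of_dotProduct_mulVec_pos hHerm fun x hx => ?_
  have hy : Aᴴ *ᵥ x ≠ 0 := by
    intro h0
    exact hx (hAH (by simpa using h0))
  have hpos : 0 < dotProduct (star x) ((A * Aᴴ) *ᵥ x) := by
    rw [← Matrix.mulVec_mulVec, Matrix.dotProduct_mulVec]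
    have hrw : star x ᵥ* A = star (Aᴴ *ᵥ x) := by
      rw [Matrix.star_mulVec, Matrix.conjTranspose_conjTranspose]
    rw [hrw]
    exact Matrix.dotProduct_star_self_pos_iff.mpr hy
  rw [Matrix.smul_mulVec, dotProduct_smul, smul_eq_mul]
  rw [Complex.lt_def] at hpos ⊢
  obtain ⟨hre, him⟩ := hpos
  have hSpos : (0 : ℝ) < (S : ℝ)⁻¹ := by positivity
  constructor
  · simp only [Complex.mul_re, Complex.zero_re] at *
    simp only [one_div, ← Complex.ofReal_natCast, ← Complex.ofReal_inv, Complex.ofReal_re,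
      Complex.ofReal_im]
    rw [← him]
    nlinarith
  · simp only [Complex.mul_im, Complex.zero_im] at *
    simp only [one_div, ← Complex.ofReal_natCast, ← Complex.ofReal_inv, Complex.ofReal_re,
      Complex.ofReal_im]
    rw [← him]
    ring
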